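/- Let A be a cocommutative Hopf algebra over a field of characteristic 0 and let B, B' : A → A be idempotent Hopf algebra endomorphisms (B ∘ B = B, B' ∘ B' = B', both algebra and coalgebra maps) satisfying B(x₁)B'(x₂) = x for all x ∈ A. Then: (a) B and B' are Rota–Baxter operators of weight −1 on A, i.e. B(x)B(y) = B(B(x₁) y S(B(x₂)) x₃) and B'(x)B'(y) = B'(B'(x₁) y S(B'(x₂)) x₃) for all x, y ∈ A, and moreover B(B'(x)) = B'(B(x)) = ε(x)1 for all x ∈ A; (b) B'(x₁)B(x₂) = x for all x ∈ A. -/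

import Mathlib

open TensorProduct LinearMap

noncomputable section

universe u

variable {K H : Type u} [Field K] [CharZero K] [Ring H] [HopfAlgebra K H]

/-- The antipode of `H` as a `K`-linear map. -/
def aS (K H : Type u) [Field K] [Ring H] [HopfAlgebra K H] : H →ₗ[K] H :=
  HopfAlgebra.antipode K

/-- Convolution-type composite: `conv f g x = f x₁ * g x₂` in Sweedler notation,
where the source may be any coalgebra `C`. -/
def conv {C : Type u} [AddCommGroup C] [Module K C] [Coalgebra K C]
    (f g : C →ₗ[K] H) : C →ₗ[K] H :=
  LinearMap.mul' K H ∘ₗ TensorProduct.map f g ∘ₗ Coalgebra.comul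

/-- `wrap f g h (a ⊗ₜ c) = f a₁ * (g c * h a₂)` in Sweedler notation. -/
def wrap {C : Type u} [AddCommGroup C] [Module K C] [Coalgebra K C]
    (f : C →ₗ[K] H) (g : H →ₗ[K] H) (h : C →ₗ[K] H) : C ⊗[K] H →ₗ[K] H :=
  LinearMap.mul' K H ∘ₗ
    TensorProduct.map f
      (LinearMap.mul' K H ∘ₗ TensorProduct.map g h ∘ₗ (TensorProduct.comm K C H).toLinearMap) ∘ₗ
    (TensorProduct.assoc K C C H).toLinearMap ∘ₗ
    TensorProduct.map Coalgebra.comul LinearMap.id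

/-- The descendent product: `mulB B (x ⊗ₜ y) = B x₁ * (y * (S (B x₂) * x₃))`,
i.e. `x *_B y = B(x₁) y S(B(x₂)) x₃` in Sweedler notation. -/
def mulB (B : H →ₗ[K] H) : H ⊗[K] H →ₗ[K] H :=
  wrap B LinearMap.id (conv (aS K H ∘ₗ B) LinearMap.id)

/-- `Bt B x = x₁ * B (S x₂)`, i.e. the operator `B̃`. -/
def Bt (B : H →ₗ[K] H) : H →ₗ[K] H := conv LinearMap.id (B ∘ₗ aS K H)

/-- `SB B x = S(B x₁) * (S x₂ * B x₃)`, the antipode `S_B` of the descendent Hopf algebra. -/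
def SB (B : H →ₗ[K] H) : H →ₗ[K] H := conv (aS K H ∘ₗ B) (conv (aS K H) B)

/-- `H` is cocommutative. -/
def IsCocomm (K H : Type u) [Field K] [Ring H] [HopfAlgebra K H] : Prop :=
  ∀ x : H, (TensorProduct.comm K H H) (Coalgebra.comul x) = Coalgebra.comul x

/-- `B` is a Rota–Baxter operator of weight `-1` on `H`: it is a coalgebra map and
`B x * B y = B (B(x₁) y S(B(x₂)) x₃)` in Sweedler notation. -/
def IsRotaBaxter (B : H →ₗ[K] H) : Prop :=
  (Coalgebra.comul ∘ₗ B = TensorProduct.map B B ∘ₗ Coalgebra.comul) ∧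
  (Coalgebra.counit ∘ₗ B = Coalgebra.counit) ∧
  ∀ x y : H, B x * B y = B (mulB B (x ⊗ₜ[K] y))


set_option linter.unusedSectionVars false

open Coalgebra

def uH (K H : Type u) [Field K] [Ring H] [HopfAlgebra K H] : H →ₗ[K] H :=
  Algebra.linearMap K H ∘ₗ Coalgebra.counit

lemma conv_apply' (f g : H →ₗ[K] H) (x : H) :
    conv f g x = LinearMap.mul' K H (TensorProduct.map f g (Coalgebra.comul x)) := rfl

lemma conv_repr (f g : H →ₗ[K] H) {x : H} (r : Coalgebra.Repr K x (H × H)) :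
    conv f g x = ∑ i ∈ r.index, f (r.left i) * g (r.right i) := by
  rw [conv_apply', ← r.eq]
  simp [map_sum]

lemma uH_apply (x : H) : uH K H x = Coalgebra.counit (R := K) x • (1 : H) := by
  simp [uH, Algebra.algebraMap_eq_smul_one]

lemma repr_counit_right {x : H} (r : Coalgebra.Repr K x (H × H)) :
    ∑ i ∈ r.index, Coalgebra.counit (R := K) (r.right i) • r.left i = x := by
  have h := Coalgebra.sum_tmul_counit_eq r
  have h2 := congrArg (TensorProduct.rid K H) h
  simp only [map_sum, TensorProduct.rid_tmul, one_smul] at h2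
  exact h2

lemma repr_counit_left {x : H} (r : Coalgebra.Repr K x (H × H)) :
    ∑ i ∈ r.index, Coalgebra.counit (R := K) (r.left i) • r.right i = x := by
  have h := Coalgebra.sum_counit_tmul_eq r
  have h2 := congrArg (TensorProduct.lid K H) h
  simp only [map_sum, TensorProduct.lid_tmul, one_smul] at h2
  exact h2

lemma conv_unit_right (f : H →ₗ[K] H) : conv f (uH K H) = f := by
  ext x
  rw [conv_repr f (uH K H) (Coalgebra.Repr.arbitrary K x)]
  calc ∑ i ∈ (ℛ K x).index, f ((ℛ K x).left i) * uH K H ((ℛ K x).right i)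
      = ∑ i ∈ (ℛ K x).index, f (Coalgebra.counit (R := K) ((ℛ K x).right i) • (ℛ K x).left i) := by
        refine Finset.sum_congr rfl fun i _ => ?_
        rw [uH_apply, mul_smul_comm, mul_one, map_smul]
    _ = f x := by rw [← map_sum, repr_counit_right]

lemma conv_unit_left (f : H →ₗ[K] H) : conv (uH K H) f = f := by
  ext x
  rw [conv_repr (uH K H) f (Coalgebra.Repr.arbitrary K x)]
  calc ∑ i ∈ (ℛ K x).index, uH K H ((ℛ K x).left i) * f ((ℛ K x).right i)
      = ∑ i ∈ (ℛ K x).index, f (Coalgebra.counit (R := K) ((ℛ K x).left i) • (ℛ K x).right i) := by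
        refine Finset.sum_congr rfl fun i _ => ?_
        rw [uH_apply, smul_mul_assoc, one_mul, map_smul]
    _ = f x := by rw [← map_sum, repr_counit_left]

lemma conv_assoc (f g h : H →ₗ[K] H) : conv (conv f g) h = conv f (conv g h) := by
  ext x
  set r := ℛ K x with hr
  rw [conv_repr (conv f g) h r, conv_repr f (conv g h) r]
  have key := Coalgebra.sum_map_tmul_tmul_eq (R := K) (f : H →ₗ[K] H) g h x
    (repr := r) (a₁ := fun i => ℛ K (r.left i)) (a₂ := fun i => ℛ K (r.right i))
  have key2 := congrArg (LinearMap.mul' K H ∘ₗ LinearMap.lTensor H (LinearMap.mul' K H)) key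
  simp only [map_sum, LinearMap.comp_apply, LinearMap.lTensor_tmul, LinearMap.mul'_apply] at key2
  calc ∑ i ∈ r.index, conv f g (r.left i) * h (r.right i)
      = ∑ i ∈ r.index, ∑ j ∈ (ℛ K (r.left i)).index,
          f ((ℛ K (r.left i)).left j) * (g ((ℛ K (r.left i)).right j) * h (r.right i)) := by
        refine Finset.sum_congr rfl fun i _ => ?_
        rw [conv_repr f g (ℛ K (r.left i)), Finset.sum_mul]
        exact Finset.sum_congr rfl fun j _ => mul_assoc _ _ _
    _ = ∑ i ∈ r.index, f (r.left i) * conv g h (r.right i) := by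
        rw [← key2]
        refine Finset.sum_congr rfl fun i _ => ?_
        rw [conv_repr g h (ℛ K (r.right i)), Finset.mul_sum]

lemma conv_id_aS : conv (LinearMap.id) (aS K H) = uH K H := by
  unfold conv uH aS
  rw [show TensorProduct.map (LinearMap.id : H →ₗ[K] H) (HopfAlgebra.antipode K)
      = LinearMap.lTensor H (HopfAlgebra.antipode K) from rfl]
  exact HopfAlgebra.mul_antipode_lTensor_comul

lemma conv_aS_id : conv (aS K H) (LinearMap.id) = uH K H := by
  unfold conv uH aS
  rw [show TensorProduct.map (HopfAlgebra.antipode K : H →ₗ[K] H) LinearMap.id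
      = LinearMap.rTensor H (HopfAlgebra.antipode K) from rfl]
  exact HopfAlgebra.mul_antipode_rTensor_comul

lemma comp_conv (ψ f g : H →ₗ[K] H) (hψ : ∀ a b : H, ψ (a * b) = ψ a * ψ b) :
    ψ ∘ₗ conv f g = conv (ψ ∘ₗ f) (ψ ∘ₗ g) := by
  ext x
  rw [LinearMap.comp_apply, conv_repr f g (ℛ K x), conv_repr (ψ ∘ₗ f) (ψ ∘ₗ g) (ℛ K x),
    map_sum]
  exact Finset.sum_congr rfl fun i _ => hψ _ _

lemma conv_comp (f g φ : H →ₗ[K] H)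
    (hφ : Coalgebra.comul ∘ₗ φ = TensorProduct.map φ φ ∘ₗ Coalgebra.comul) :
    conv f g ∘ₗ φ = conv (f ∘ₗ φ) (g ∘ₗ φ) := by
  unfold conv
  rw [LinearMap.comp_assoc, LinearMap.comp_assoc, hφ,
    ← LinearMap.comp_assoc _ (TensorProduct.map φ φ), ← TensorProduct.map_comp]

lemma uH_comp (φ : H →ₗ[K] H) (hφ : Coalgebra.counit ∘ₗ φ = Coalgebra.counit (R := K)) :
    uH K H ∘ₗ φ = uH K H := by
  unfold uH
  rw [LinearMap.comp_assoc, hφ]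

lemma comp_uH (φ : H →ₗ[K] H) (hφ : φ 1 = 1) : φ ∘ₗ uH K H = uH K H := by
  ext x
  simp [uH_apply, hφ]

lemma conv_cancel (f g h : H →ₗ[K] H) (h1 : conv f g = uH K H) (h2 : conv g h = uH K H) :
    f = h := by
  have : conv f (conv g h) = conv (conv f g) h := (conv_assoc f g h).symm
  rw [h1, h2, conv_unit_right, conv_unit_left] at this
  exact this

section Tlemmas
variable (T : H →ₗ[K] H)

lemma conv_aS_comp (hTcomul : Coalgebra.comul ∘ₗ T = TensorProduct.map T T ∘ₗ Coalgebra.comul)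
    (hTcounit : Coalgebra.counit ∘ₗ T = Coalgebra.counit (R := K)) :
    conv (aS K H ∘ₗ T) T = uH K H := by
  have h1 : conv (aS K H ∘ₗ T) (LinearMap.id ∘ₗ T) = conv (aS K H) LinearMap.id ∘ₗ T :=
    (conv_comp _ _ T hTcomul).symm
  rw [LinearMap.id_comp] at h1
  rw [h1, conv_aS_id, uH_comp T hTcounit]

lemma conv_comp_aS (hTcomul : Coalgebra.comul ∘ₗ T = TensorProduct.map T T ∘ₗ Coalgebra.comul)
    (hTcounit : Coalgebra.counit ∘ₗ T = Coalgebra.counit (R := K)) :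
    conv T (aS K H ∘ₗ T) = uH K H := by
  have h1 : conv (LinearMap.id ∘ₗ T) (aS K H ∘ₗ T) = conv LinearMap.id (aS K H) ∘ₗ T :=
    (conv_comp _ _ T hTcomul).symm
  rw [LinearMap.id_comp] at h1
  rw [h1, conv_id_aS, uH_comp T hTcounit]

lemma comp_aS_conv (hTmul : ∀ a b : H, T (a * b) = T a * T b) (hTone : T 1 = 1) :
    conv (T ∘ₗ aS K H) T = uH K H := by
  have h1 : conv (T ∘ₗ aS K H) (T ∘ₗ LinearMap.id) = T ∘ₗ conv (aS K H) LinearMap.id :=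
    (comp_conv T _ _ hTmul).symm
  rw [LinearMap.comp_id] at h1
  rw [h1, conv_aS_id, comp_uH T hTone]

lemma conv_comp_aS' (hTmul : ∀ a b : H, T (a * b) = T a * T b) (hTone : T 1 = 1) :
    conv T (T ∘ₗ aS K H) = uH K H := by
  have h1 : conv (T ∘ₗ LinearMap.id) (T ∘ₗ aS K H) = T ∘ₗ conv LinearMap.id (aS K H) :=
    (comp_conv T _ _ hTmul).symm
  rw [LinearMap.comp_id] at h1
  rw [h1, conv_id_aS, comp_uH T hTone]

lemma aS_comp_comm (hTmul : ∀ a b : H, T (a * b) = T a * T b) (hTone : T 1 = 1)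
    (hTcomul : Coalgebra.comul ∘ₗ T = TensorProduct.map T T ∘ₗ Coalgebra.comul)
    (hTcounit : Coalgebra.counit ∘ₗ T = Coalgebra.counit (R := K)) :
    T ∘ₗ aS K H = aS K H ∘ₗ T :=
  conv_cancel _ T _ (comp_aS_conv T hTmul hTone) (conv_comp_aS T hTcomul hTcounit)

lemma aS_comp_idem (hTmul : ∀ a b : H, T (a * b) = T a * T b) (hTone : T 1 = 1)
    (hTcomul : Coalgebra.comul ∘ₗ T = TensorProduct.map T T ∘ₗ Coalgebra.comul)
    (hTcounit : Coalgebra.counit ∘ₗ T = Coalgebra.counit (R := K))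
    (hTidem : T ∘ₗ T = T) :
    T ∘ₗ (aS K H ∘ₗ T) = aS K H ∘ₗ T := by
  rw [← LinearMap.comp_assoc, aS_comp_comm T hTmul hTone hTcomul hTcounit,
    LinearMap.comp_assoc, hTidem]

end Tlemmas


lemma mulB_repr (T : H →ₗ[K] H) (x y : H) (r : Coalgebra.Repr K x (H × H)) :
    mulB T (x ⊗ₜ[K] y) = ∑ i ∈ r.index,
      T (r.left i) * (y * conv (aS K H ∘ₗ T) LinearMap.id (r.right i)) := by
  unfold mulB wrap
  simp only [LinearMap.comp_apply, TensorProduct.map_tmul, LinearMap.id_coe, id_eq]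
  rw [← r.eq]
  simp only [TensorProduct.sum_tmul, map_sum, TensorProduct.assoc_tmul,
    TensorProduct.map_tmul, LinearMap.coe_comp, Function.comp_apply,
    LinearEquiv.coe_coe, TensorProduct.comm_tmul, LinearMap.mul'_apply,
    LinearMap.id_coe, id_eq]

lemma sum_absorb (f : H →ₗ[K] H) (p : H) {x : H} (r : Coalgebra.Repr K x (H × H)) :
    ∑ i ∈ r.index, f (r.left i) * (p * (Coalgebra.counit (R := K) (r.right i) • (1 : H)))
      = f x * p := by
  have step : ∀ i ∈ r.index,
      f (r.left i) * (p * (Coalgebra.counit (R := K) (r.right i) • (1 : H)))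
        = (Coalgebra.counit (R := K) (r.right i) • f (r.left i)) * p := by
    intro i _
    rw [mul_smul_comm, mul_one, mul_smul_comm, ← smul_mul_assoc]
  rw [Finset.sum_congr rfl step, ← Finset.sum_mul]
  congr 1
  simp only [← map_smul]
  rw [← map_sum, repr_counit_right]

lemma RB_of (T : H →ₗ[K] H) (hTmul : ∀ a b : H, T (a * b) = T a * T b) (hTone : T 1 = 1)
    (hTcomul : Coalgebra.comul ∘ₗ T = TensorProduct.map T T ∘ₗ Coalgebra.comul)
    (hTcounit : Coalgebra.counit ∘ₗ T = Coalgebra.counit (R := K))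
    (hTidem : T ∘ₗ T = T) :
    ∀ x y : H, T x * T y = T (mulB T (x ⊗ₜ[K] y)) := by
  have hg : T ∘ₗ conv (aS K H ∘ₗ T) LinearMap.id = uH K H := by
    rw [comp_conv T _ _ hTmul, aS_comp_idem T hTmul hTone hTcomul hTcounit hTidem,
      LinearMap.comp_id]
    exact conv_aS_comp T hTcomul hTcounit
  intro x y
  set r := ℛ K x with hrdef
  rw [mulB_repr T x y r, map_sum]
  have step : ∀ i ∈ r.index,
      T (T (r.left i) * (y * conv (aS K H ∘ₗ T) LinearMap.id (r.right i)))
        = T (r.left i) * (T y * (Coalgebra.counit (R := K) (r.right i) • (1 : H))) := by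
    intro i _
    rw [hTmul, hTmul]
    have h1 : T (T (r.left i)) = T (r.left i) := LinearMap.congr_fun hTidem (r.left i)
    have h2 : T (conv (aS K H ∘ₗ T) LinearMap.id (r.right i))
        = Coalgebra.counit (R := K) (r.right i) • (1 : H) := by
      have := LinearMap.congr_fun hg (r.right i)
      simpa [uH_apply] using this
    rw [h1, h2]
  rw [Finset.sum_congr rfl step, sum_absorb T (T y) r]

section Pair
variable (B B' : H →ₗ[K] H)

lemma B'_eq (hBcomul : Coalgebra.comul ∘ₗ B = TensorProduct.map B B ∘ₗ Coalgebra.comul)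
    (hBcounit : Coalgebra.counit ∘ₗ B = Coalgebra.counit (R := K))
    (hpair' : conv B B' = LinearMap.id) :
    B' = conv (aS K H ∘ₗ B) LinearMap.id := by
  calc B' = conv (uH K H) B' := (conv_unit_left B').symm
    _ = conv (conv (aS K H ∘ₗ B) B) B' := by rw [conv_aS_comp B hBcomul hBcounit]
    _ = conv (aS K H ∘ₗ B) (conv B B') := conv_assoc _ _ _
    _ = conv (aS K H ∘ₗ B) LinearMap.id := by rw [hpair']

lemma B_eq (hB'comul : Coalgebra.comul ∘ₗ B' = TensorProduct.map B' B' ∘ₗ Coalgebra.comul)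
    (hB'counit : Coalgebra.counit ∘ₗ B' = Coalgebra.counit (R := K))
    (hpair' : conv B B' = LinearMap.id) :
    B = conv LinearMap.id (aS K H ∘ₗ B') := by
  calc B = conv B (uH K H) := (conv_unit_right B).symm
    _ = conv B (conv B' (aS K H ∘ₗ B')) := by rw [conv_comp_aS B' hB'comul hB'counit]
    _ = conv (conv B B') (aS K H ∘ₗ B') := (conv_assoc _ _ _).symm
    _ = conv LinearMap.id (aS K H ∘ₗ B') := by rw [hpair']

lemma R2a (hBmul : ∀ a b : H, B (a * b) = B a * B b) (hBone : B 1 = 1)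
    (hBcomul : Coalgebra.comul ∘ₗ B = TensorProduct.map B B ∘ₗ Coalgebra.comul)
    (hBcounit : Coalgebra.counit ∘ₗ B = Coalgebra.counit (R := K))
    (hBidem : B ∘ₗ B = B)
    (hpair' : conv B B' = LinearMap.id) :
    B ∘ₗ B' = uH K H := by
  rw [B'_eq B B' hBcomul hBcounit hpair', comp_conv B _ _ hBmul,
    aS_comp_idem B hBmul hBone hBcomul hBcounit hBidem, LinearMap.comp_id]
  exact conv_aS_comp B hBcomul hBcounit

lemma R2b (hB'mul : ∀ a b : H, B' (a * b) = B' a * B' b) (hB'one : B' 1 = 1)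
    (hB'comul : Coalgebra.comul ∘ₗ B' = TensorProduct.map B' B' ∘ₗ Coalgebra.comul)
    (hB'counit : Coalgebra.counit ∘ₗ B' = Coalgebra.counit (R := K))
    (hB'idem : B' ∘ₗ B' = B')
    (hpair' : conv B B' = LinearMap.id) :
    B' ∘ₗ B = uH K H := by
  rw [B_eq B B' hB'comul hB'counit hpair', comp_conv B' _ _ hB'mul,
    aS_comp_idem B' hB'mul hB'one hB'comul hB'counit hB'idem, LinearMap.comp_id]
  exact conv_comp_aS B' hB'comul hB'counit

end Pair

section Cocomm

lemma hccL (hcc : ∀ x : H, (TensorProduct.comm K H H) (Coalgebra.comul x) = Coalgebra.comul x) :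
    (TensorProduct.comm K H H).toLinearMap ∘ₗ Coalgebra.comul = Coalgebra.comul (R := K) :=
  LinearMap.ext hcc

lemma claim1a :
    (TensorProduct.assoc K H H (H ⊗[K] H)).symm.toLinearMap
        ∘ₗ LinearMap.lTensor H (LinearMap.lTensor H (Coalgebra.comul (R := K) (A := H)))
        ∘ₗ (TensorProduct.assoc K H H H).toLinearMap
      = LinearMap.lTensor (H ⊗[K] H) (Coalgebra.comul (R := K)) := by
  apply TensorProduct.ext_threefold
  intro a b c
  simp

lemma claim1b :
    LinearMap.lTensor (H ⊗[K] H) (Coalgebra.comul (R := K) (A := H))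
        ∘ₗ LinearMap.rTensor H (Coalgebra.comul (R := K) (A := H))
      = TensorProduct.map Coalgebra.comul Coalgebra.comul := by
  apply TensorProduct.ext'
  intro a b
  simp

def psiMap : H ⊗[K] ((H ⊗[K] H) ⊗[K] H) →ₗ[K] (H ⊗[K] H) ⊗[K] (H ⊗[K] H) :=
  (TensorProduct.assoc K H H (H ⊗[K] H)).symm.toLinearMap
    ∘ₗ LinearMap.lTensor H (TensorProduct.assoc K H H H).toLinearMap

def Qmap : H →ₗ[K] H ⊗[K] ((H ⊗[K] H) ⊗[K] H) :=
  LinearMap.lTensor H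
      (LinearMap.rTensor H (Coalgebra.comul (R := K)) ∘ₗ Coalgebra.comul)
    ∘ₗ Coalgebra.comul

lemma claim1 : (psiMap ∘ₗ Qmap : H →ₗ[K] (H ⊗[K] H) ⊗[K] (H ⊗[K] H))
    = TensorProduct.map Coalgebra.comul Coalgebra.comul ∘ₗ Coalgebra.comul := by
  have h1 : (TensorProduct.assoc K H H H).toLinearMap
      ∘ₗ LinearMap.rTensor H (Coalgebra.comul (R := K)) ∘ₗ Coalgebra.comul
      = LinearMap.lTensor H (Coalgebra.comul (R := K)) ∘ₗ Coalgebra.comul :=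
    Coalgebra.coassoc
  have h2 : LinearMap.lTensor H (TensorProduct.assoc K H H H).toLinearMap
        ∘ₗ LinearMap.lTensor H
          (LinearMap.rTensor H (Coalgebra.comul (R := K)) ∘ₗ Coalgebra.comul)
      = LinearMap.lTensor H (LinearMap.lTensor H (Coalgebra.comul (R := K)))
        ∘ₗ LinearMap.lTensor H (Coalgebra.comul (R := K)) := by
    rw [← LinearMap.lTensor_comp, h1, LinearMap.lTensor_comp]
  unfold psiMap Qmap
  calc ((TensorProduct.assoc K H H (H ⊗[K] H)).symm.toLinearMap
        ∘ₗ LinearMap.lTensor H (TensorProduct.assoc K H H H).toLinearMap)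
        ∘ₗ LinearMap.lTensor H
          (LinearMap.rTensor H (Coalgebra.comul (R := K)) ∘ₗ Coalgebra.comul)
        ∘ₗ Coalgebra.comul
      = (TensorProduct.assoc K H H (H ⊗[K] H)).symm.toLinearMap
        ∘ₗ (LinearMap.lTensor H (TensorProduct.assoc K H H H).toLinearMap
        ∘ₗ LinearMap.lTensor H
          (LinearMap.rTensor H (Coalgebra.comul (R := K)) ∘ₗ Coalgebra.comul))
        ∘ₗ Coalgebra.comul := by
        simp only [LinearMap.comp_assoc]
    _ = (TensorProduct.assoc K H H (H ⊗[K] H)).symm.toLinearMap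
        ∘ₗ (LinearMap.lTensor H (LinearMap.lTensor H (Coalgebra.comul (R := K)))
        ∘ₗ LinearMap.lTensor H (Coalgebra.comul (R := K)))
        ∘ₗ Coalgebra.comul := by rw [h2]
    _ = (TensorProduct.assoc K H H (H ⊗[K] H)).symm.toLinearMap
        ∘ₗ LinearMap.lTensor H (LinearMap.lTensor H (Coalgebra.comul (R := K)))
        ∘ₗ (TensorProduct.assoc K H H H).toLinearMap
        ∘ₗ LinearMap.rTensor H (Coalgebra.comul (R := K)) ∘ₗ Coalgebra.comul := by
        rw [h1]; simp only [LinearMap.comp_assoc]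
    _ = (((TensorProduct.assoc K H H (H ⊗[K] H)).symm.toLinearMap
        ∘ₗ LinearMap.lTensor H (LinearMap.lTensor H (Coalgebra.comul (R := K)))
        ∘ₗ (TensorProduct.assoc K H H H).toLinearMap)
        ∘ₗ LinearMap.rTensor H (Coalgebra.comul (R := K))) ∘ₗ Coalgebra.comul := by
        simp only [LinearMap.comp_assoc]
    _ = (LinearMap.lTensor (H ⊗[K] H) (Coalgebra.comul (R := K))
        ∘ₗ LinearMap.rTensor H (Coalgebra.comul (R := K))) ∘ₗ Coalgebra.comul := by
        rw [claim1a]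
    _ = TensorProduct.map Coalgebra.comul Coalgebra.comul ∘ₗ Coalgebra.comul := by
        rw [claim1b]

lemma claim2 : (TensorProduct.tensorTensorTensorComm K H H H H).toLinearMap ∘ₗ psiMap
    = psiMap ∘ₗ LinearMap.lTensor H
        (LinearMap.rTensor H (TensorProduct.comm K H H).toLinearMap) := by
  unfold psiMap
  ext a e f d
  simp

lemma claim3 (hcc : ∀ x : H, (TensorProduct.comm K H H) (Coalgebra.comul x) = Coalgebra.comul x) :
    LinearMap.lTensor H (LinearMap.rTensor H (TensorProduct.comm K H H).toLinearMap) ∘ₗ Qmap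
      = (Qmap : H →ₗ[K] H ⊗[K] ((H ⊗[K] H) ⊗[K] H)) := by
  unfold Qmap
  rw [← LinearMap.comp_assoc, ← LinearMap.lTensor_comp, ← LinearMap.comp_assoc,
    ← LinearMap.rTensor_comp, hccL hcc]

lemma SL (hcc : ∀ x : H, (TensorProduct.comm K H H) (Coalgebra.comul x) = Coalgebra.comul x) :
    (TensorProduct.tensorTensorTensorComm K H H H H).toLinearMap
        ∘ₗ TensorProduct.map Coalgebra.comul Coalgebra.comul ∘ₗ Coalgebra.comul
      = TensorProduct.map (Coalgebra.comul (R := K) (A := H)) Coalgebra.comul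
          ∘ₗ Coalgebra.comul := by
  rw [← claim1, ← LinearMap.comp_assoc, claim2, LinearMap.comp_assoc, claim3 hcc]

end Cocomm

section ConvCoalg

lemma F1 : Coalgebra.comul (R := K) ∘ₗ LinearMap.mul' K H
    = LinearMap.mul' K (H ⊗[K] H) ∘ₗ
        TensorProduct.map (Coalgebra.comul (R := K)) (Coalgebra.comul (R := K)) := by
  apply TensorProduct.ext'
  intro a b
  simp

lemma F2 : LinearMap.mul' K (H ⊗[K] H)
    = TensorProduct.map (LinearMap.mul' K H) (LinearMap.mul' K H)
        ∘ₗ (TensorProduct.tensorTensorTensorComm K H H H H).toLinearMap := by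
  apply TensorProduct.ext_fourfold'
  intro a b c d
  simp [Algebra.TensorProduct.tmul_mul_tmul]

lemma F3 (f g : H →ₗ[K] H) :
    (TensorProduct.tensorTensorTensorComm K H H H H).toLinearMap
        ∘ₗ TensorProduct.map (TensorProduct.map f f) (TensorProduct.map g g)
      = TensorProduct.map (TensorProduct.map f g) (TensorProduct.map f g)
        ∘ₗ (TensorProduct.tensorTensorTensorComm K H H H H).toLinearMap := by
  apply TensorProduct.ext_fourfold'
  intro a b c d
  simp

lemma conv_comul (f g : H →ₗ[K] H)
    (hcc : ∀ x : H, (TensorProduct.comm K H H) (Coalgebra.comul x) = Coalgebra.comul x)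
    (hf : Coalgebra.comul ∘ₗ f = TensorProduct.map f f ∘ₗ Coalgebra.comul)
    (hg : Coalgebra.comul ∘ₗ g = TensorProduct.map g g ∘ₗ Coalgebra.comul) :
    Coalgebra.comul ∘ₗ conv f g = TensorProduct.map (conv f g) (conv f g) ∘ₗ Coalgebra.comul := by
  unfold conv
  calc Coalgebra.comul ∘ₗ LinearMap.mul' K H ∘ₗ TensorProduct.map f g ∘ₗ Coalgebra.comul
      = (Coalgebra.comul ∘ₗ LinearMap.mul' K H) ∘ₗ TensorProduct.map f g ∘ₗ Coalgebra.comul := by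
        simp only [LinearMap.comp_assoc]
    _ = LinearMap.mul' K (H ⊗[K] H) ∘ₗ
          (TensorProduct.map (Coalgebra.comul (R := K)) (Coalgebra.comul (R := K))
            ∘ₗ TensorProduct.map f g) ∘ₗ Coalgebra.comul := by
        rw [F1]; simp only [LinearMap.comp_assoc]
    _ = LinearMap.mul' K (H ⊗[K] H) ∘ₗ
          (TensorProduct.map (TensorProduct.map f f) (TensorProduct.map g g)
            ∘ₗ TensorProduct.map (Coalgebra.comul (R := K)) (Coalgebra.comul (R := K)))
            ∘ₗ Coalgebra.comul := by
        rw [← TensorProduct.map_comp, hf, hg, TensorProduct.map_comp]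
    _ = TensorProduct.map (LinearMap.mul' K H) (LinearMap.mul' K H)
          ∘ₗ ((TensorProduct.tensorTensorTensorComm K H H H H).toLinearMap
            ∘ₗ TensorProduct.map (TensorProduct.map f f) (TensorProduct.map g g))
          ∘ₗ TensorProduct.map (Coalgebra.comul (R := K)) (Coalgebra.comul (R := K))
          ∘ₗ Coalgebra.comul := by
        rw [F2]; simp only [LinearMap.comp_assoc]
    _ = TensorProduct.map (LinearMap.mul' K H) (LinearMap.mul' K H)
          ∘ₗ TensorProduct.map (TensorProduct.map f g) (TensorProduct.map f g)
          ∘ₗ (TensorProduct.tensorTensorTensorComm K H H H H).toLinearMap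
          ∘ₗ TensorProduct.map (Coalgebra.comul (R := K)) (Coalgebra.comul (R := K))
          ∘ₗ Coalgebra.comul := by
        rw [F3]; simp only [LinearMap.comp_assoc]
    _ = TensorProduct.map (LinearMap.mul' K H) (LinearMap.mul' K H)
          ∘ₗ TensorProduct.map (TensorProduct.map f g) (TensorProduct.map f g)
          ∘ₗ TensorProduct.map (Coalgebra.comul (R := K)) (Coalgebra.comul (R := K))
          ∘ₗ Coalgebra.comul := by
        rw [SL hcc]
    _ = TensorProduct.map
          (LinearMap.mul' K H ∘ₗ TensorProduct.map f g ∘ₗ Coalgebra.comul)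
          (LinearMap.mul' K H ∘ₗ TensorProduct.map f g ∘ₗ Coalgebra.comul)
          ∘ₗ Coalgebra.comul := by
        rw [← LinearMap.comp_assoc, ← TensorProduct.map_comp, ← LinearMap.comp_assoc,
          ← TensorProduct.map_comp]
        simp only [LinearMap.comp_assoc]

end ConvCoalg

lemma R3 (B B' : H →ₗ[K] H)
    (hcc : ∀ x : H, (TensorProduct.comm K H H) (Coalgebra.comul x) = Coalgebra.comul x)
    (hBmul : ∀ x y : H, B (x * y) = B x * B y) (hBone : B (1 : H) = 1)
    (hBcomul : Coalgebra.comul ∘ₗ B = TensorProduct.map B B ∘ₗ Coalgebra.comul)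
    (hBcounit : Coalgebra.counit ∘ₗ B = Coalgebra.counit (R := K))
    (hBidem : B ∘ₗ B = B)
    (hB'mul : ∀ x y : H, B' (x * y) = B' x * B' y) (hB'one : B' (1 : H) = 1)
    (hB'comul : Coalgebra.comul ∘ₗ B' = TensorProduct.map B' B' ∘ₗ Coalgebra.comul)
    (hB'counit : Coalgebra.counit ∘ₗ B' = Coalgebra.counit (R := K))
    (hB'idem : B' ∘ₗ B' = B')
    (hpair' : conv B B' = LinearMap.id) :
    conv B' B = LinearMap.id := by
  have hE : Coalgebra.comul ∘ₗ conv B' B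
      = TensorProduct.map (conv B' B) (conv B' B) ∘ₗ Coalgebra.comul :=
    conv_comul B' B hcc hB'comul hBcomul
  have hBE : B ∘ₗ conv B' B = B := by
    rw [comp_conv B B' B hBmul, R2a B B' hBmul hBone hBcomul hBcounit hBidem hpair', hBidem,
      conv_unit_left]
  have hB'E : B' ∘ₗ conv B' B = B' := by
    rw [comp_conv B' B' B hB'mul, R2b B B' hB'mul hB'one hB'comul hB'counit hB'idem hpair',
      hB'idem, conv_unit_right]
  calc conv B' B = LinearMap.id ∘ₗ conv B' B := (LinearMap.id_comp _).symm
    _ = conv B B' ∘ₗ conv B' B := by rw [hpair']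
    _ = conv (B ∘ₗ conv B' B) (B' ∘ₗ conv B' B) := conv_comp B B' (conv B' B) hE
    _ = conv B B' := by rw [hBE, hB'E]
    _ = LinearMap.id := hpair'


/-- a projection homomorphism pair `(B, B')` consists of Rota–Baxter operators
of weight `-1`, with `B ∘ B' = B' ∘ B = ε(·) 1`, and `B'(x₁) B(x₂) = x`. -/
theorem stmt18 (B B' : H →ₗ[K] H) (hcc : _root_.IsCocomm K H)
    (hBmul : ∀ x y : H, B (x * y) = B x * B y) (hBone : B (1 : H) = 1)
    (hBcomul : Coalgebra.comul ∘ₗ B = TensorProduct.map B B ∘ₗ Coalgebra.comul)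
    (hBcounit : Coalgebra.counit ∘ₗ B = Coalgebra.counit)
    (hBidem : B ∘ₗ B = B)
    (hB'mul : ∀ x y : H, B' (x * y) = B' x * B' y) (hB'one : B' (1 : H) = 1)
    (hB'comul : Coalgebra.comul ∘ₗ B' = TensorProduct.map B' B' ∘ₗ Coalgebra.comul)
    (hB'counit : Coalgebra.counit ∘ₗ B' = Coalgebra.counit)
    (hB'idem : B' ∘ₗ B' = B')
    (hpair : ∀ x : H, conv B B' x = x) :
    (∀ x y : H, B x * B y = B (mulB B (x ⊗ₜ[K] y))) ∧
    (∀ x y : H, B' x * B' y = B' (mulB B' (x ⊗ₜ[K] y))) ∧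
    (∀ x : H, B (B' x) = Coalgebra.counit (R := K) x • (1 : H) ∧
      B' (B x) = Coalgebra.counit (R := K) x • (1 : H)) ∧
    (∀ x : H, conv B' B x = x) := by
  have hcc' : ∀ x : H, (TensorProduct.comm K H H) (Coalgebra.comul x) = Coalgebra.comul x := hcc
  have hpair' : conv B B' = LinearMap.id := LinearMap.ext hpair
  refine ⟨RB_of B hBmul hBone hBcomul hBcounit hBidem,
          RB_of B' hB'mul hB'one hB'comul hB'counit hB'idem, ?_, ?_⟩
  · intro x
    constructor
    · have h := LinearMap.congr_fun
        (R2a B B' hBmul hBone hBcomul hBcounit hBidem hpair') x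
      simpa [uH_apply] using h
    · have h := LinearMap.congr_fun
        (R2b B B' hB'mul hB'one hB'comul hB'counit hB'idem hpair') x
      simpa [uH_apply] using h
  · intro x
    exact LinearMap.congr_fun
      (R3 B B' hcc' hBmul hBone hBcomul hBcounit hBidem
        hB'mul hB'one hB'comul hB'counit hB'idem hpair') x


end
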